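/- arXiv:1507.00447 — 7 statements merged into one kernel-verified Lean document; each statement's English description precedes it below -/
import Mathlib

section
/- Let S ⊆ {0,1}^d, let n be a positive integer, and let c ∈ ℤ^{d×n} be defined by c_{i,j} = -(d+1)^{j-1} for all i,j. If x, y ∈ S^n are such that the vulnerability vector (|x̄^1|,...,|x̄^n|) of x is lexicographically smaller than that of y (i.e., the last index r where they differ satisfies |x̄^r| < |ȳ^r|), then c·x̄ > c·ȳ (where the products are entrywise inner products of matrices). -/
/-- Two `d × n` matrices are equivalent if each row of one is a permutation
of the corresponding row of the other. -/
def Eqv {d n : ℕ} (x y : Fin d → Fin n → ℕ) : Prop :=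
  ∀ i : Fin d, ∃ σ : Equiv.Perm (Fin n), ∀ j, x i j = y i (σ j)

/-- `xb` is the shift of `x`: equivalent to `x` and each row nonincreasing. -/
def IsShift {d n : ℕ} (xb x : Fin d → Fin n → ℕ) : Prop :=
  Eqv xb x ∧ ∀ i : Fin d, ∀ j k : Fin n, j ≤ k → xb i k ≤ xb i j

lemma iio_geom (d n : ℕ) (r : Fin n) :
    ∑ j ∈ Finset.Iio r, ((d : ℤ) + 1) ^ (j : ℕ)
      = ∑ m ∈ Finset.range (r : ℕ), ((d : ℤ) + 1) ^ m := by
  refine Finset.sum_bij' (fun j _ => (j : ℕ)) (fun m hm => ⟨m, ?_⟩) ?_ ?_ ?_ ?_ ?_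
  · exact lt_trans (Finset.mem_range.mp hm) r.isLt
  · intro a ha
    simpa [Finset.mem_range] using (Finset.mem_Iio.mp ha)
  · intro a ha
    simp [Finset.mem_Iio, Fin.lt_def, Finset.mem_range.mp ha]
  · intro a _; rfl
  · intro a _; rfl
  · intro a _; rfl

lemma key (d n : ℕ) (A B : Fin n → ℤ)
    (hA0 : ∀ j, 0 ≤ A j) (hAd : ∀ j, A j ≤ d) (hB0 : ∀ j, 0 ≤ B j)
    (r : Fin n) (hr : A r + 1 ≤ B r) (heq : ∀ j, r < j → A j = B j) :
    ∑ j : Fin n, ((d : ℤ) + 1) ^ (j : ℕ) * A j < ∑ j : Fin n, ((d : ℤ) + 1) ^ (j : ℕ) * B j := by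
  set p : Fin n → ℤ := fun j => ((d : ℤ) + 1) ^ (j : ℕ) with hp
  have hppos : ∀ j, 0 < p j := fun j => pow_pos (by positivity) _
  rw [← sub_pos, ← Finset.sum_sub_distrib]
  have h1 : ∀ j, p j * B j - p j * A j = p j * (B j - A j) := by intro j; ring
  show 0 < ∑ j, (p j * B j - p j * A j)
  simp_rw [h1]
  set g : Fin n → ℤ := fun j => p j * (B j - A j) with hg
  have hzero : ∀ j ∈ Finset.univ, j ∉ Finset.Iic r → g j = 0 := by
    intro j _ hj
    have : r < j := by simpa [Finset.mem_Iic] using hj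
    simp [hg, heq j this]
  have hsum : ∑ j, g j = ∑ j ∈ Finset.Iic r, g j :=
    (Finset.sum_subset (Finset.subset_univ _) hzero).symm
  rw [hsum, ← Finset.Iio_insert, Finset.sum_insert (by simp)]
  have hgr : p r ≤ g r := by
    have : (1 : ℤ) ≤ B r - A r := by linarith [hr]
    calc p r = p r * 1 := (mul_one _).symm
    _ ≤ g r := by
      apply mul_le_mul_of_nonneg_left this (le_of_lt (hppos r))
  have hlow : ∀ j ∈ Finset.Iio r, -(p j * d) ≤ g j := by
    intro j _
    have h2 : -(d : ℤ) ≤ B j - A j := by linarith [hB0 j, hAd j]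
    have := mul_le_mul_of_nonneg_left h2 (le_of_lt (hppos j))
    show -(p j * (d : ℤ)) ≤ p j * (B j - A j)
    linarith
  have hsum2 : ∑ j ∈ Finset.Iio r, -(p j * (d : ℤ)) ≤ ∑ j ∈ Finset.Iio r, g j :=
    Finset.sum_le_sum hlow
  have hgeom : ∑ j ∈ Finset.Iio r, p j * (d : ℤ) = ((d : ℤ) + 1) ^ (r : ℕ) - 1 := by
    rw [← Finset.sum_mul, hp]
    rw [iio_geom d n r]
    have := geom_sum_mul ((d : ℤ) + 1) (r : ℕ)
    simpa using this
  have : ∑ j ∈ Finset.Iio r, -(p j * (d : ℤ)) = -(((d : ℤ) + 1) ^ (r : ℕ) - 1) := by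
    rw [Finset.sum_neg_distrib, hgeom]
  rw [this] at hsum2
  have hpr : p r = ((d : ℤ) + 1) ^ (r : ℕ) := rfl
  linarith

theorem stmt0 (d n : ℕ) (hn : 0 < n) (S : Set (Fin d → ℕ))
    (hS : ∀ z ∈ S, ∀ i, z i ≤ 1)
    (c : Fin d → Fin n → ℤ) (hc : ∀ i j, c i j = -((d : ℤ) + 1) ^ (j : ℕ))
    (x y xb yb : Fin d → Fin n → ℕ)
    (hx : ∀ j, (fun i => x i j) ∈ S) (hy : ∀ j, (fun i => y i j) ∈ S)
    (hxb : IsShift xb x) (hyb : IsShift yb y)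
    (r : Fin n) (hr1 : (∑ i, xb i r) < ∑ i, yb i r)
    (hr2 : ∀ j, r < j → (∑ i, xb i j) = ∑ i, yb i j) :
    (∑ i, ∑ j, c i j * (yb i j : ℤ)) < ∑ i, ∑ j, c i j * (xb i j : ℤ) := by
  set A : Fin n → ℤ := fun j => ∑ i, (xb i j : ℤ) with hA
  set B : Fin n → ℤ := fun j => ∑ i, (yb i j : ℤ) with hB
  have hxble : ∀ i j, xb i j ≤ 1 := by
    intro i j
    obtain ⟨σ, hσ⟩ := hxb.1 i
    rw [hσ j]
    exact hS _ (hx (σ j)) i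
  have hA0 : ∀ j, 0 ≤ A j := fun j => Finset.sum_nonneg fun i _ => by positivity
  have hB0 : ∀ j, 0 ≤ B j := fun j => Finset.sum_nonneg fun i _ => by positivity
  have hAd : ∀ j, A j ≤ d := by
    intro j
    calc A j ≤ ∑ _i : Fin d, (1 : ℤ) := by
          apply Finset.sum_le_sum
          intro i _
          exact_mod_cast hxble i j
    _ = d := by simp
  have hr1' : A r + 1 ≤ B r := by
    have : ((∑ i, xb i r : ℕ) : ℤ) < ((∑ i, yb i r : ℕ) : ℤ) := by exact_mod_cast hr1
    push_cast at this
    simpa [hA, hB] using this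
  have heq : ∀ j, r < j → A j = B j := by
    intro j hj
    have := hr2 j hj
    have : ((∑ i, xb i j : ℕ) : ℤ) = ((∑ i, yb i j : ℕ) : ℤ) := by exact_mod_cast this
    push_cast at this
    simpa [hA, hB] using this
  have hkey := key d n A B hA0 hAd hB0 r hr1' heq
  have hrw : ∀ zb : Fin d → Fin n → ℕ,
      (∑ i, ∑ j, c i j * (zb i j : ℤ))
        = -∑ j : Fin n, ((d : ℤ) + 1) ^ (j : ℕ) * ∑ i, (zb i j : ℤ) := by
    intro zb
    rw [Finset.sum_comm, ← Finset.sum_neg_distrib]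
    apply Finset.sum_congr rfl
    intro j _
    rw [Finset.mul_sum, ← Finset.sum_neg_distrib]
    apply Finset.sum_congr rfl
    intro i _
    rw [hc i j]; ring
  rw [hrw xb, hrw yb]
  simpa using hkey
end

section
/- Let S ⊆ {0,1}^d and n a positive integer. Then [S^n] = ∨_n(↑_n S), i.e., a 0-1 matrix x ∈ {0,1}^{d×n} is row-permutation-equivalent to some matrix in S^n if and only if x can be written as a sum x = Σ_{k=1}^n x_k of 0-1 matrices x_k ∈ {0,1}^{d×n} with pairwise disjoint supports such that for each k the column sum Σ_{j=1}^n x_k^j lies in S. -/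
/-- Two 0-1 vectors with equal sums are related by a permutation. -/
lemma perm_of_01 {n : ℕ} (f g : Fin n → ℕ) (hf : ∀ j, f j ≤ 1) (hg : ∀ j, g j ≤ 1)
    (hsum : ∑ j, f j = ∑ j, g j) : ∃ σ : Equiv.Perm (Fin n), ∀ j, f j = g (σ j) := by
  classical
  have hcard : ∀ (h : Fin n → ℕ), (∀ j, h j ≤ 1) →
      ∑ j, h j = Fintype.card {j // h j = 1} := by
    intro h hh
    rw [Fintype.card_subtype, Finset.card_filter]
    refine Finset.sum_congr rfl fun j _ => ?_
    have := hh j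
    by_cases hj : h j = 1 <;> simp [hj] <;> omega
  have card1 : Fintype.card {j // f j = 1} = Fintype.card {j // g j = 1} := by
    rw [← hcard f hf, ← hcard g hg, hsum]
  have card0 : Fintype.card {j // ¬ f j = 1} = Fintype.card {j // ¬ g j = 1} := by
    rw [Fintype.card_subtype_compl, Fintype.card_subtype_compl, card1]
  let e1 : {j // f j = 1} ≃ {j // g j = 1} := Fintype.equivOfCardEq card1
  let e0 : {j // ¬ f j = 1} ≃ {j // ¬ g j = 1} := Fintype.equivOfCardEq card0
  refine ⟨(Equiv.sumCompl fun j => f j = 1).symm.trans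
    ((Equiv.sumCongr e1 e0).trans (Equiv.sumCompl fun j => g j = 1)), fun j => ?_⟩
  by_cases h : f j = 1
  · rw [h]
    simp only [Equiv.trans_apply, Equiv.sumCompl_symm_apply_of_pos (p := fun j => f j = 1) (a := j) h,
      Equiv.sumCongr_apply, Sum.map_inl, Equiv.sumCompl_apply_inl]
    exact (e1 ⟨j, h⟩).2.symm
  · have hf0 : f j = 0 := by have := hf j; omega
    rw [hf0]
    simp only [Equiv.trans_apply, Equiv.sumCompl_symm_apply_of_neg (p := fun j => f j = 1) (a := j) h,
      Equiv.sumCongr_apply, Sum.map_inr, Equiv.sumCompl_apply_inr]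
    have := (e0 ⟨j, h⟩).2
    have := hg (e0 ⟨j, h⟩)
    omega

/-- `[Sⁿ] = ∨ₙ ↑ₙ S`: a 0-1 matrix is row-permutation-equivalent to a matrix with all
columns in `S` iff it is a sum of `n` support-disjoint 0-1 matrices whose column sums lie
in `S`. -/
theorem stmt1 (d n : ℕ) (hn : 0 < n) (S : Set (Fin d → ℕ))
    (hS : ∀ z ∈ S, ∀ i, z i ≤ 1)
    (x : Fin d → Fin n → ℕ) (hx01 : ∀ i j, x i j ≤ 1) :
    (∃ y : Fin d → Fin n → ℕ, (∀ j, (fun i => y i j) ∈ S) ∧ Eqv x y) ↔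
    (∃ xs : Fin n → Fin d → Fin n → ℕ,
      (∀ k i j, xs k i j ≤ 1) ∧
      (∀ k, (fun i => ∑ j, xs k i j) ∈ S) ∧
      (∀ k l, k ≠ l → ∀ i j, xs k i j = 0 ∨ xs l i j = 0) ∧
      (∀ i j, x i j = ∑ k, xs k i j)) := by
  classical
  constructor
  · rintro ⟨y, hyS, hEqv⟩
    choose σ hσ using hEqv
    refine ⟨fun k i j => if σ i j = k then x i j else 0, ?_, ?_, ?_, ?_⟩
    · intro k i j
      show (if σ i j = k then x i j else 0) ≤ 1
      split <;> [exact hx01 i j; omega]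
    · intro k
      have hcol : (fun i => ∑ j, if σ i j = k then x i j else 0) = fun i => y i k := by
        funext i
        have : ∀ j, (if σ i j = k then x i j else 0) = (if σ i j = k then y i k else 0) := by
          intro j
          by_cases h : σ i j = k
          · rw [if_pos h, if_pos h, hσ i j, h]
          · rw [if_neg h, if_neg h]
        rw [Finset.sum_congr rfl fun j _ => this j]
        rw [Fintype.sum_equiv (σ i) _ (fun j' => if j' = k then y i k else 0) (fun j => rfl)]
        simp
      rw [hcol]
      exact hyS k
    · intro k l hkl i j
      by_cases h : σ i j = k
      · right
        show (if σ i j = l then x i j else 0) = 0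
        rw [if_neg (by rw [h]; exact hkl)]
      · left
        show (if σ i j = k then x i j else 0) = 0
        rw [if_neg h]
    · intro i j
      simp
  · rintro ⟨xs, hxs01, hxsS, _, hxsum⟩
    refine ⟨fun i k => ∑ j, xs k i j, fun k => hxsS k, fun i => ?_⟩
    refine perm_of_01 (x i) _ (hx01 i) (fun k => hS _ (hxsS k) i) ?_
    calc ∑ j, x i j = ∑ j, ∑ k, xs k i j := by
          exact Finset.sum_congr rfl fun j _ => hxsum i j
      _ = ∑ k, ∑ j, xs k i j := Finset.sum_comm
end

section
/- If S ⊆ {0,1}^d is the set of indicators of independent sets of a matroid of rank r, then the matroid [S^n] = ∨_n(↑_n S) on ground set [d]×[n] has rank exactly n·r. -/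
def IsMatroid {E : Type*} [Fintype E] [DecidableEq E] (S : Set (E → ℕ)) : Prop :=
  (∀ z ∈ S, ∀ i, z i ≤ 1) ∧
  ((fun _ => 0) ∈ S) ∧
  (∀ x ∈ S, ∀ y : E → ℕ, (∀ i, y i ≤ x i) → y ∈ S) ∧
  (∀ x ∈ S, ∀ y ∈ S, (∑ i, y i) < (∑ i, x i) →
    ∃ i, x i = 1 ∧ y i = 0 ∧ Function.update y i 1 ∈ S)

/-- `[Sⁿ]`: the set of matrices equivalent to some matrix all of whose columns lie in `S`. -/
def SBracket {d : ℕ} (n : ℕ) (S : Set (Fin d → ℕ)) : Set (Fin d → Fin n → ℕ) :=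
  {x | ∃ y : Fin d → Fin n → ℕ, (∀ j, (fun i => y i j) ∈ S) ∧ Eqv x y}

/-- If `S` is a matroid of rank `r`, then the matroid `[Sⁿ]` has rank `n * r`. -/
theorem stmt4 (d n : ℕ) (hn : 0 < n) (S : Set (Fin d → ℕ)) (hM : IsMatroid S)
    (r : ℕ) (hr1 : ∃ z ∈ S, (∑ i, z i) = r) (hr2 : ∀ z ∈ S, (∑ i, z i) ≤ r) :
    (∃ x ∈ SBracket n S, (∑ i, ∑ j, x i j) = n * r) ∧
      ∀ x ∈ SBracket n S, (∑ i, ∑ j, x i j) ≤ n * r := by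
  obtain ⟨z, hz, hzr⟩ := hr1
  constructor
  · refine ⟨fun i _ => z i, ⟨fun i _ => z i, fun j => hz, fun i => ⟨Equiv.refl _, fun j => rfl⟩⟩, ?_⟩
    simp [← Finset.mul_sum, ← Finset.sum_mul, hzr, mul_comm]
  · rintro x ⟨y, hy, hxy⟩
    have hsum : (∑ i, ∑ j, x i j) = ∑ i, ∑ j, y i j := by
      refine Finset.sum_congr rfl fun i _ => ?_
      obtain ⟨σ, hσ⟩ := hxy i
      rw [show (∑ j, x i j) = ∑ j, y i (σ j) from Finset.sum_congr rfl fun j _ => hσ j]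
      exact Equiv.sum_comp σ (y i)
    rw [hsum, Finset.sum_comm]
    calc (∑ j, ∑ i, y i j) ≤ ∑ _j : Fin n, r :=
          Finset.sum_le_sum fun j _ => hr2 _ (hy j)
      _ = n * r := by simp [mul_comm]
end

section
/- Suppose x is a maximizer of c·x over [S^n] (the shuffling problem with profit matrix c̄, where c̄ has nonincreasing rows), and y ∈ S^n satisfies x ∼ y. Then y is an optimal solution of the shifted problem max{c̄·z̄ : z ∈ S^n}: for every z ∈ S^n one has c̄·ȳ ≥ c̄·z̄. -/
/-- If `x` maximizes `c̄·x` over `[Sⁿ]` and `y ∈ Sⁿ` satisfies `x ∼ y`, then `y` is optimal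
for the shifted problem: `c̄·ȳ ≥ c̄·z̄` for every `z ∈ Sⁿ`. -/
theorem stmt6 (d n : ℕ) (S : Set (Fin d → ℕ)) (hS : ∀ z ∈ S, ∀ i, z i ≤ 1)
    (cb : Fin d → Fin n → ℤ) (hcb : ∀ i : Fin d, ∀ j k : Fin n, j ≤ k → cb i k ≤ cb i j)
    (x : Fin d → Fin n → ℕ)
    (hxmem : ∃ u : Fin d → Fin n → ℕ, (∀ j, (fun i => u i j) ∈ S) ∧ Eqv x u)
    (hxopt : ∀ x' : Fin d → Fin n → ℕ,
      (∃ u : Fin d → Fin n → ℕ, (∀ j, (fun i => u i j) ∈ S) ∧ Eqv x' u) →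
      (∑ i, ∑ j, cb i j * (x' i j : ℤ)) ≤ ∑ i, ∑ j, cb i j * (x i j : ℤ))
    (y : Fin d → Fin n → ℕ) (hy : ∀ j, (fun i => y i j) ∈ S) (hxy : Eqv x y)
    (yb : Fin d → Fin n → ℕ) (hyb : IsShift yb y)
    (z : Fin d → Fin n → ℕ) (hz : ∀ j, (fun i => z i j) ∈ S)
    (zb : Fin d → Fin n → ℕ) (hzb : IsShift zb z) :
    (∑ i, ∑ j, cb i j * (zb i j : ℤ)) ≤ ∑ i, ∑ j, cb i j * (yb i j : ℤ) := by
  have key : ∀ (i : Fin d) (σ : Equiv.Perm (Fin n)),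
      ∑ j, cb i j * (yb i (σ j) : ℤ) ≤ ∑ j, cb i j * (yb i j : ℤ) := by
    intro i σ
    have hmono : Monovary (cb i) (fun j => (yb i j : ℤ)) := by
      intro j k hlt
      simp only [Nat.cast_lt] at hlt
      rcases le_or_gt j k with h | h
      · exact absurd (hyb.2 i j k h) (not_le.mpr hlt)
      · exact hcb i k j h.le
    simpa only [smul_eq_mul] using hmono.sum_smul_comp_perm_le_sum_smul (σ := σ)
  have hxyb : ∀ i, ∃ σ : Equiv.Perm (Fin n), ∀ j, x i j = yb i (σ j) := by
    intro i
    obtain ⟨σ, hσ⟩ := hxy i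
    obtain ⟨τ, hτ⟩ := hyb.1 i
    exact ⟨σ.trans τ.symm, fun j => by simp [hσ j, hτ (τ.symm (σ j))]⟩
  have h1 : (∑ i, ∑ j, cb i j * (zb i j : ℤ)) ≤ ∑ i, ∑ j, cb i j * (x i j : ℤ) :=
    hxopt zb ⟨z, hz, hzb.1⟩
  have h2 : (∑ i, ∑ j, cb i j * (x i j : ℤ)) ≤ ∑ i, ∑ j, cb i j * (yb i j : ℤ) := by
    apply Finset.sum_le_sum
    intro i _
    obtain ⟨σ, hσ⟩ := hxyb i
    calc ∑ j, cb i j * (x i j : ℤ) = ∑ j, cb i j * (yb i (σ j) : ℤ) := by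
          simp [hσ]
      _ ≤ _ := key i σ
  exact h1.trans h2
end

section
/- If S ⊆ {0,1}^d is a strongly base orderable matroid, then ↑_n S ⊆ {0,1}^{d×n} is also a strongly base orderable matroid. -/
/-- `z` is a basis of the matroid `S`: an inclusionwise-maximal member. -/
def IsBaseV {E : Type*} (S : Set (E → ℕ)) (z : E → ℕ) : Prop :=
  z ∈ S ∧ ∀ w ∈ S, (∀ i, z i ≤ w i) → w = z

/-- The 0-1 indicator vector of a subset of the ground set. -/
noncomputable def indFun {E : Type*} (A : Set E) : E → ℕ := A.indicator 1

/-- `S` is strongly base orderable: for every pair of bases (given by their supports)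
there is a bijection `π` between the supports such that for every subset `I` of the
first support, `π(I) ∪ (B₁ \ I)` is again (the support of) a basis. -/
def IsSBO {E : Type*} (S : Set (E → ℕ)) : Prop :=
  ∀ z w : E → ℕ, IsBaseV S z → IsBaseV S w →
    ∃ π : E → E, Set.BijOn π {i | z i = 1} {i | w i = 1} ∧
      ∀ I ⊆ {i | z i = 1}, IsBaseV S (indFun (π '' I ∪ ({i | z i = 1} \ I)))

def Lift (d n : ℕ) (S : Set (Fin d → ℕ)) : Set (Fin d × Fin n → ℕ) :=
  {x | (fun i => ∑ j, x (i, j)) ∈ S}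

lemma base_not_lt {E : Type*} [Fintype E] [DecidableEq E] {S : Set (E → ℕ)} (hM : IsMatroid S)
    {z w : E → ℕ} (hz : z ∈ S) (hw : IsBaseV S w) : ¬ (∑ i, w i < ∑ i, z i) := by
  intro h
  obtain ⟨i, hzi, hwi, hup⟩ := hM.2.2.2 z hz w hw.1 h
  have := hw.2 _ hup (by
    intro k
    rcases eq_or_ne k i with rfl | hk
    · simp [hwi]
    · simp [Function.update_apply, hk])
  have : Function.update w i 1 i = w i := by rw [this]
  simp [hwi] at this

lemma bases_sum_eq {E : Type*} [Fintype E] [DecidableEq E] {S : Set (E → ℕ)} (hM : IsMatroid S)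
    {z w : E → ℕ} (hz : IsBaseV S z) (hw : IsBaseV S w) : ∑ i, z i = ∑ i, w i :=
  le_antisymm (not_lt.1 (base_not_lt hM hz.1 hw)) (not_lt.1 (base_not_lt hM hw.1 hz))

lemma colsum_update_of_rowzero {d n : ℕ} {x : Fin d × Fin n → ℕ} {i : Fin d}
    (hrow : ∀ j, x (i, j) = 0) (j₀ : Fin n) :
    (fun k => ∑ j, Function.update x (i, j₀) 1 (k, j))
      = Function.update (fun k => ∑ j, x (k, j)) i 1 := by
  funext k
  rcases eq_or_ne k i with rfl | hk
  · simp only [Function.update_apply, Prod.mk.injEq, true_and, hrow]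
    simp [Function.update_self]
  · simp only [Function.update_apply, Prod.mk.injEq]
    simp [hk]

lemma lift_isMatroid {d n : ℕ} {S : Set (Fin d → ℕ)} (hM : IsMatroid S) :
    IsMatroid (Lift d n S) := by
  refine ⟨?_, ?_, ?_, ?_⟩
  · intro x hx p
    calc x p ≤ ∑ j, x (p.1, j) :=
          Finset.single_le_sum (f := fun j => x (p.1, j)) (fun _ _ => Nat.zero_le _)
            (Finset.mem_univ p.2)
      _ ≤ 1 := hM.1 _ hx p.1
  · show (fun i => ∑ _j : Fin n, (0 : ℕ)) ∈ S
    simpa using hM.2.1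
  · intro x hx y hle
    exact hM.2.2.1 _ hx _ (fun i => Finset.sum_le_sum (fun j _ => hle (i, j)))
  · intro x hx y hy hsum
    rw [Fintype.sum_prod_type, Fintype.sum_prod_type] at hsum
    obtain ⟨i, hXi, hYi, hup⟩ := hM.2.2.2 _ hx _ hy hsum
    have hrow : ∀ j, y (i, j) = 0 :=
      fun j => (Finset.sum_eq_zero_iff.1 hYi) j (Finset.mem_univ j)
    have hex : ∃ j, x (i, j) = 1 := by
      obtain ⟨j, _, hj⟩ := Finset.exists_ne_zero_of_sum_ne_zero
        (by rw [hXi]; exact one_ne_zero)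
      refine ⟨j, le_antisymm ?_ (Nat.one_le_iff_ne_zero.2 hj)⟩
      calc x (i, j) ≤ ∑ j', x (i, j') :=
            Finset.single_le_sum (f := fun j' => x (i, j')) (fun _ _ => Nat.zero_le _)
              (Finset.mem_univ j)
        _ = 1 := hXi
    obtain ⟨j, hj⟩ := hex
    refine ⟨(i, j), hj, hrow j, ?_⟩
    show (fun k => ∑ j', Function.update y (i, j) 1 (k, j')) ∈ S
    rw [colsum_update_of_rowzero hrow j]
    exact hup

lemma lift_base_of_colsum {d n : ℕ} {S : Set (Fin d → ℕ)}
    {x : Fin d × Fin n → ℕ} (hx : IsBaseV S (fun i => ∑ j, x (i, j))) :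
    IsBaseV (Lift d n S) x := by
  refine ⟨hx.1, ?_⟩
  intro v hv hle
  have hcol : ∀ i, (∑ j, x (i, j)) ≤ ∑ j, v (i, j) :=
    fun i => Finset.sum_le_sum (fun j _ => hle (i, j))
  have heq := hx.2 _ hv hcol
  have hsum : ∑ p : Fin d × Fin n, x p = ∑ p : Fin d × Fin n, v p := by
    rw [Fintype.sum_prod_type, Fintype.sum_prod_type]
    exact (Finset.sum_congr rfl (fun i _ => (congrFun heq i).symm))
  have := (Finset.sum_eq_sum_iff_of_le (fun p _ => hle p)).1 hsum
  exact funext fun p => ((this p (Finset.mem_univ p)).symm)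

lemma colsum_base_of_lift {d n : ℕ} (hn : 0 < n) {S : Set (Fin d → ℕ)} (hM : IsMatroid S)
    {x : Fin d × Fin n → ℕ} (hx : IsBaseV (Lift d n S) x) :
    IsBaseV S (fun i => ∑ j, x (i, j)) := by
  refine ⟨hx.1, ?_⟩
  intro W hW hle
  by_contra hne
  have hex : ∃ i, ∑ j, x (i, j) < W i := by
    by_contra h; push_neg at h
    exact hne (funext fun i => le_antisymm (h i) (hle i))
  obtain ⟨i, hi⟩ := hex
  have hWle := hM.1 W hW i
  have hX0 : ∑ j, x (i, j) = 0 := by omega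
  have hrow : ∀ j, x (i, j) = 0 := by
    intro j
    exact (Finset.sum_eq_zero_iff.1 hX0) j (Finset.mem_univ j)
  set j₀ : Fin n := ⟨0, hn⟩
  have hvS : Function.update x (i, j₀) 1 ∈ Lift d n S := by
    show (fun k => ∑ j, Function.update x (i, j₀) 1 (k, j)) ∈ S
    rw [colsum_update_of_rowzero hrow j₀]
    apply hM.2.2.1 W hW
    intro k
    rcases eq_or_ne k i with rfl | hk
    · simpa using by omega
    · rw [Function.update_of_ne hk]; exact hle k
  have := hx.2 _ hvS (by
    intro p
    rcases eq_or_ne p (i, j₀) with rfl | hp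
    · simp [hrow]
    · rw [Function.update_of_ne hp])
  have h2 : Function.update x (i, j₀) 1 (i, j₀) = x (i, j₀) := by rw [this]
  simp [hrow] at h2

lemma sum_indFun {E : Type*} [Fintype E] (A : Set E) :
    ∑ i, indFun A i = A.ncard := by
  classical
  trans (Finset.univ.filter (· ∈ A)).card
  · simp [indFun, Set.indicator_apply]
  · rw [Set.ncard_eq_toFinset_card']
    congr 1
    ext i
    simp

lemma eq_indFun_support {E : Type*} {z : E → ℕ} (h : ∀ i, z i ≤ 1) :
    z = indFun {i | z i = 1} := by
  funext i
  have := h i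
  interval_cases hzi : z i <;> simp [indFun, Set.indicator_apply, hzi]

lemma lift_isSBO {d n : ℕ} {S : Set (Fin d → ℕ)} (hM : IsMatroid S) (hSBO : IsSBO S) :
    IsSBO (Lift d n S) := by
  classical
  rcases Nat.eq_zero_or_pos n with rfl | hn
  · intro z w hz hw
    refine ⟨id, ?_, ?_⟩
    · have h1 : {p : Fin d × Fin 0 | z p = 1} = ∅ :=
        Set.eq_empty_of_forall_notMem (fun p _ => p.2.elim0)
      have h2 : {p : Fin d × Fin 0 | w p = 1} = ∅ :=
        Set.eq_empty_of_forall_notMem (fun p _ => p.2.elim0)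
      rw [h1, h2]
      exact ⟨fun p h => h.elim, fun p _ q _ _ => (p.2.elim0), fun p h => h.elim⟩
    · intro I hI
      have h3 : indFun (id '' I ∪ ({p | z p = 1} \ I)) = z := funext fun p => p.2.elim0
      rw [h3]; exact hz
  intro z w hz hw
  set Z : Fin d → ℕ := fun i => ∑ j, z (i, j) with hZdef
  set W : Fin d → ℕ := fun i => ∑ j, w (i, j) with hWdef
  have hZ : IsBaseV S Z := colsum_base_of_lift hn hM hz
  have hW : IsBaseV S W := colsum_base_of_lift hn hM hw
  have hZ1 : ∀ i, Z i ≤ 1 := hM.1 Z hZ.1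
  have hW1 : ∀ i, W i ≤ 1 := hM.1 W hW.1
  have hent : ∀ (v : Fin d × Fin n → ℕ) i j, v (i, j) ≤ ∑ j', v (i, j') := by
    intro v i j
    exact Finset.single_le_sum (f := fun j' => v (i, j')) (fun _ _ => Nat.zero_le _)
      (Finset.mem_univ j)
  have hzent : ∀ i j, z (i, j) = 1 → Z i = 1 :=
    fun i j hj => le_antisymm (hZ1 i) (hj ▸ hent z i j)
  have hwent : ∀ i j, w (i, j) = 1 → W i = 1 :=
    fun i j hj => le_antisymm (hW1 i) (hj ▸ hent w i j)
  have huniq : ∀ (v : Fin d × Fin n → ℕ), (∀ i, ∑ j, v (i, j) ≤ 1) →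
      ∀ i j j', v (i, j) = 1 → v (i, j') = 1 → j = j' := by
    intro v hv i j j' h1 h2
    by_contra hne
    have h3 : 2 ≤ ∑ j'', v (i, j'') := by
      calc (2 : ℕ) = ∑ x ∈ ({j, j'} : Finset (Fin n)), v (i, x) := by
            rw [Finset.sum_pair hne, h1, h2]
        _ ≤ ∑ j'', v (i, j'') :=
            Finset.sum_le_sum_of_subset (Finset.subset_univ _)
    have := hv i
    omega
  have hexz : ∀ (v : Fin d × Fin n → ℕ) i, (∀ i', ∑ j, v (i', j) ≤ 1) →
      (∑ j, v (i, j)) = 1 → ∃ j, v (i, j) = 1 := by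
    intro v i hv hi
    obtain ⟨j, _, hj⟩ := Finset.exists_ne_zero_of_sum_ne_zero
      (by rw [hi]; exact one_ne_zero)
    exact ⟨j, le_antisymm (le_trans (hent v i j) (hv i)) (Nat.one_le_iff_ne_zero.2 hj)⟩
  set jz : Fin d → Fin n := fun i =>
    if h : ∃ j, z (i, j) = 1 then h.choose else ⟨0, hn⟩ with hjzdef
  set jw : Fin d → Fin n := fun i =>
    if h : ∃ j, w (i, j) = 1 then h.choose else ⟨0, hn⟩ with hjwdef
  have hjz : ∀ i, Z i = 1 → z (i, jz i) = 1 := by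
    intro i hi
    have h := hexz z i hZ1 hi
    rw [hjzdef]; simp only [dif_pos h]; exact h.choose_spec
  have hjw : ∀ i, W i = 1 → w (i, jw i) = 1 := by
    intro i hi
    have h := hexz w i hW1 hi
    rw [hjwdef]; simp only [dif_pos h]; exact h.choose_spec
  have hzc : ∀ p : Fin d × Fin n, z p = 1 ↔ (Z p.1 = 1 ∧ p.2 = jz p.1) := by
    intro p
    constructor
    · intro hp
      have h1 : Z p.1 = 1 := hzent p.1 p.2 hp
      exact ⟨h1, huniq z hZ1 p.1 p.2 (jz p.1) hp (hjz p.1 h1)⟩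
    · rintro ⟨h1, h2⟩
      have : p = (p.1, jz p.1) := Prod.ext rfl h2
      rw [this]; exact hjz p.1 h1
  have hwc : ∀ p : Fin d × Fin n, w p = 1 ↔ (W p.1 = 1 ∧ p.2 = jw p.1) := by
    intro p
    constructor
    · intro hp
      have h1 : W p.1 = 1 := hwent p.1 p.2 hp
      exact ⟨h1, huniq w hW1 p.1 p.2 (jw p.1) hp (hjw p.1 h1)⟩
    · rintro ⟨h1, h2⟩
      have : p = (p.1, jw p.1) := Prod.ext rfl h2
      rw [this]; exact hjw p.1 h1
  obtain ⟨π₀, hbij, hbase⟩ := hSBO Z W hZ hW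
  set π : Fin d × Fin n → Fin d × Fin n :=
    fun p => if z p = 1 then (π₀ p.1, jw (π₀ p.1)) else p with hπdef
  have hπval : ∀ p : Fin d × Fin n, z p = 1 → π p = (π₀ p.1, jw (π₀ p.1)) := by
    intro p hp; rw [hπdef]; simp only [if_pos hp]
  refine ⟨π, ⟨?_, ?_, ?_⟩, ?_⟩
  · -- MapsTo
    intro p hp
    have hp' : z p = 1 := hp
    rw [hπval p hp']
    have h1 : W (π₀ p.1) = 1 := hbij.mapsTo (hzent p.1 p.2 hp')
    show w (π₀ p.1, jw (π₀ p.1)) = 1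
    exact (hwc _).2 ⟨h1, rfl⟩
  · -- InjOn
    intro p hp q hq heq
    have hp' : z p = 1 := hp
    have hq' : z q = 1 := hq
    rw [hπval p hp', hπval q hq'] at heq
    have h1 : π₀ p.1 = π₀ q.1 := congrArg Prod.fst heq
    have h2 : p.1 = q.1 := hbij.injOn (hzent p.1 p.2 hp') (hzent q.1 q.2 hq') h1
    have h3 : p.2 = jz p.1 := ((hzc p).1 hp').2
    have h4 : q.2 = jz q.1 := ((hzc q).1 hq').2
    exact Prod.ext h2 (by rw [h3, h4, h2])
  · -- SurjOn
    intro q hq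
    have hq' : w q = 1 := hq
    have h1 : W q.1 = 1 := hwent q.1 q.2 hq'
    obtain ⟨i, hiZ, hiq⟩ := hbij.surjOn h1
    have hiZ' : Z i = 1 := hiZ
    refine ⟨(i, jz i), hjz i hiZ', ?_⟩
    rw [hπval (i, jz i) (hjz i hiZ')]
    have h2 : q.2 = jw q.1 := ((hwc q).1 hq').2
    exact Prod.ext hiq (by rw [hiq, ← h2])
  · -- base exchange property
    intro I hI
    set I₀ : Set (Fin d) := {i | (i, jz i) ∈ I} with hI₀def
    have hI₀Z : I₀ ⊆ {i | Z i = 1} := by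
      intro i hi
      exact hzent i (jz i) (hI hi)
    have hImem : ∀ p : Fin d × Fin n, p ∈ I ↔ (p.1 ∈ I₀ ∧ p.2 = jz p.1) := by
      intro p
      constructor
      · intro hp
        have h1 : z p = 1 := hI hp
        have h2 : p.2 = jz p.1 := ((hzc p).1 h1).2
        have h3 : p = (p.1, jz p.1) := Prod.ext rfl h2
        exact ⟨by show (p.1, jz p.1) ∈ I; rw [← h3]; exact hp, h2⟩
      · rintro ⟨h1, h2⟩
        have h3 : p = (p.1, jz p.1) := Prod.ext rfl h2
        rw [h3]; exact h1
    set A : Set (Fin d) := π₀ '' I₀ with hAdef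
    set C : Set (Fin d) := {i | Z i = 1} \ I₀ with hCdef
    have hbase' : IsBaseV S (indFun (A ∪ C)) := hbase I₀ hI₀Z
    -- disjointness of A and C via cardinality
    have hdisj : ∀ k, k ∈ A → k ∈ C → False := by
      have hsum1 : ∑ i, indFun (A ∪ C) i = ∑ i, Z i := bases_sum_eq hM hbase' hZ
      have hsum2 : ∑ i, Z i = ∑ i, indFun {i | Z i = 1} i := by
        rw [← eq_indFun_support hZ1]
      rw [hsum2, sum_indFun, sum_indFun] at hsum1
      have hsplit : {i | Z i = 1} = I₀ ∪ C := by
        ext k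
        simp only [hCdef, Set.mem_union, Set.mem_diff, Set.mem_setOf_eq]
        constructor
        · intro h
          by_cases h2 : k ∈ I₀
          · exact Or.inl h2
          · exact Or.inr ⟨h, h2⟩
        · rintro (h | ⟨h, _⟩)
          · exact hI₀Z h
          · exact h
      have hdIC : Disjoint I₀ C := Set.disjoint_left.2 (fun a ha hc => hc.2 ha)
      have h2 : ({i | Z i = 1} : Set (Fin d)).ncard = I₀.ncard + C.ncard := by
        rw [hsplit, Set.ncard_union_eq hdIC]
      have hAcard : A.ncard = I₀.ncard :=
        Set.ncard_image_of_injOn (hbij.injOn.mono hI₀Z)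
      have h3 := Set.ncard_inter_add_ncard_union A C
      have h0 : (A ∩ C).ncard = 0 := by omega
      have hAC : A ∩ C = ∅ := (Set.ncard_eq_zero).1 h0
      intro k hkA hkC
      have : k ∈ A ∩ C := ⟨hkA, hkC⟩
      rw [hAC] at this
      exact this
    -- membership characterization of the new set B
    set B : Set (Fin d × Fin n) := π '' I ∪ ({p | z p = 1} \ I) with hBdef
    have hBmem : ∀ k j', ((k, j') ∈ B) ↔ ((k ∈ A ∧ j' = jw k) ∨ (k ∈ C ∧ j' = jz k)) := by
      intro k j'
      constructor
      · rintro (⟨p, hpI, hpeq⟩ | ⟨hz1, hnI⟩)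
        · have hzp : z p = 1 := hI hpI
          rw [hπval p hzp] at hpeq
          have hk : π₀ p.1 = k := congrArg Prod.fst hpeq
          have hj : jw (π₀ p.1) = j' := congrArg Prod.snd hpeq
          left
          refine ⟨⟨p.1, ((hImem p).1 hpI).1, hk⟩, by rw [← hk, hj]⟩
        · have hz1' : z (k, j') = 1 := hz1
          have h2 := (hzc (k, j')).1 hz1'
          right
          refine ⟨⟨h2.1, ?_⟩, h2.2⟩
          intro hkI₀
          apply hnI
          exact (hImem (k, j')).2 ⟨hkI₀, h2.2⟩
      · rintro (⟨⟨i, hiI₀, rfl⟩, hj'⟩ | ⟨⟨hk1, hk2⟩, hj'⟩)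
        · left
          refine ⟨(i, jz i), (hImem (i, jz i)).2 ⟨hiI₀, rfl⟩, ?_⟩
          rw [hπval (i, jz i) (hjz i (hI₀Z hiI₀))]
          exact Prod.ext rfl hj'.symm
        · right
          subst hj'
          exact ⟨hjz k hk1, fun hmem => hk2 ((hImem (k, jz k)).1 hmem).1⟩
    -- conclude
    apply lift_base_of_colsum
    have hcol : (fun k => ∑ j, indFun B (k, j)) = indFun (A ∪ C) := by
      funext k
      by_cases hA : k ∈ A
      · have hnC : k ∉ C := fun h => hdisj k hA h
        have hterm : ∀ j', indFun B (k, j') = if j' = jw k then 1 else 0 := by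
          intro j'
          by_cases hj : j' = jw k
          · rw [if_pos hj]
            have hmem : (k, j') ∈ B := (hBmem k j').2 (Or.inl ⟨hA, hj⟩)
            simp [indFun, Set.indicator_apply, hmem]
          · rw [if_neg hj]
            have hmem : (k, j') ∉ B := by
              intro h
              rcases (hBmem k j').1 h with ⟨_, h2⟩ | ⟨h1, _⟩
              · exact hj h2
              · exact hnC h1
            simp [indFun, Set.indicator_apply, hmem]
        rw [Finset.sum_congr rfl (fun j' _ => hterm j')]
        simp [indFun, Set.indicator_apply, Set.mem_union, hA]
      · by_cases hC : k ∈ C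
        · have hterm : ∀ j', indFun B (k, j') = if j' = jz k then 1 else 0 := by
            intro j'
            by_cases hj : j' = jz k
            · rw [if_pos hj]
              have hmem : (k, j') ∈ B := (hBmem k j').2 (Or.inr ⟨hC, hj⟩)
              simp [indFun, Set.indicator_apply, hmem]
            · rw [if_neg hj]
              have hmem : (k, j') ∉ B := by
                intro h
                rcases (hBmem k j').1 h with ⟨h1, _⟩ | ⟨_, h2⟩
                · exact hA h1
                · exact hj h2
              simp [indFun, Set.indicator_apply, hmem]
          rw [Finset.sum_congr rfl (fun j' _ => hterm j')]
          simp [indFun, Set.indicator_apply, Set.mem_union, hC]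
        · have hterm : ∀ j', indFun B (k, j') = 0 := by
            intro j'
            have hmem : (k, j') ∉ B := by
              intro h
              rcases (hBmem k j').1 h with ⟨h1, _⟩ | ⟨h1, _⟩
              · exact hA h1
              · exact hC h1
            simp [indFun, Set.indicator_apply, hmem]
          rw [Finset.sum_congr rfl (fun j' _ => hterm j')]
          simp [indFun, Set.indicator_apply, Set.mem_union, hA, hC]
    rw [hcol]
    exact hbase'

/-- If `S` is a strongly base orderable matroid, so is its `n`-lift `↑ₙ S`. -/
theorem stmt10 (d n : ℕ) (S : Set (Fin d → ℕ))
    (hM : IsMatroid S) (hSBO : IsSBO S) :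
    IsMatroid (Lift d n S) ∧ IsSBO (Lift d n S) :=
  ⟨lift_isMatroid hM, lift_isSBO hM hSBO⟩
end

section
/- Let A be a totally unimodular integer matrix with d columns, b an integer vector, and S = {z ∈ {0,1}^d : Az = b}. Then [S^n] = {x ∈ {0,1}^{d×n} : A·(Σ_{j=1}^n x^j) = n·b}. -/
/-- Equivalence of integer matrices: each row a permutation of the corresponding row. -/
def EqvZ {d n : ℕ} (x y : Fin d → Fin n → ℤ) : Prop :=
  ∀ i : Fin d, ∃ σ : Equiv.Perm (Fin n), ∀ j, x i j = y i (σ j)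

lemma perm_of_sum_eq {n : ℕ} (f g : Fin n → ℤ)
    (hf : ∀ j, f j = 0 ∨ f j = 1) (hg : ∀ j, g j = 0 ∨ g j = 1)
    (hsum : ∑ j, f j = ∑ j, g j) :
    ∃ σ : Equiv.Perm (Fin n), ∀ j, f j = g (σ j) := by
  classical
  have key : ∀ h : Fin n → ℤ, (∀ j, h j = 0 ∨ h j = 1) →
      ∑ j, h j = ((Finset.univ.filter (fun j => h j = 1)).card : ℤ) := by
    intro h hh
    have : ∀ j, h j = if h j = 1 then 1 else 0 := by
      intro j; rcases hh j with h0 | h0 <;> simp [h0]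
    rw [Finset.sum_congr rfl fun j _ => this j]
    simp [Finset.sum_boole]
  have hcard : (Finset.univ.filter (fun j => f j = 1)).card
      = (Finset.univ.filter (fun j => g j = 1)).card := by
    have := hsum
    rw [key f hf, key g hg] at this
    exact_mod_cast this
  have hc1 : Fintype.card {j // f j = 1} = Fintype.card {j // g j = 1} := by
    simpa [Fintype.card_subtype] using hcard
  have hc2 : Fintype.card {j // ¬ f j = 1} = Fintype.card {j // ¬ g j = 1} := by
    rw [Fintype.card_subtype_compl, Fintype.card_subtype_compl, hc1]
  let e := Fintype.equivOfCardEq hc1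
  let e' := Fintype.equivOfCardEq hc2
  refine ⟨(Equiv.sumCompl (fun j => f j = 1)).symm.trans
    ((Equiv.sumCongr e e').trans (Equiv.sumCompl (fun j => g j = 1))), ?_⟩
  intro j
  by_cases h : f j = 1
  · have hs : (Equiv.sumCompl fun j => f j = 1).symm j = Sum.inl ⟨j, h⟩ := by
      simp [Equiv.sumCompl_symm_apply_of_pos, h]
    rw [h]
    simp only [Equiv.trans_apply, hs, Equiv.sumCongr_apply, Sum.map_inl,
      Equiv.sumCompl_apply_inl]
    exact ((e ⟨j, h⟩).2).symm
  · have hf0 : f j = 0 := (hf j).resolve_right h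
    have hs : (Equiv.sumCompl fun j => f j = 1).symm j = Sum.inr ⟨j, h⟩ := by
      simp [Equiv.sumCompl_symm_apply_of_neg, h]
    rw [hf0]
    simp only [Equiv.trans_apply, hs, Equiv.sumCongr_apply, Sum.map_inr,
      Equiv.sumCompl_apply_inr]
    exact ((hg _).resolve_right (e' ⟨j, h⟩).2).symm

/-- For `S = {z ∈ {0,1}^d : Az = b}` with `A` totally unimodular,
`[Sⁿ] = {x ∈ {0,1}^{d×n} : A·(∑ⱼ xʲ) = n·b}`. The Baum–Trotter integer decomposition
property is assumed as the hypothesis `hBT`. -/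
theorem stmt13 (m d n : ℕ) (hn : 0 < n) (A : Matrix (Fin m) (Fin d) ℤ)
    (hA : A.IsTotallyUnimodular) (b : Fin m → ℤ)
    (S : Set (Fin d → ℤ))
    (hSdef : S = {z | (∀ i, z i = 0 ∨ z i = 1) ∧ A.mulVec z = b})
    (hBT : ∀ w : Fin d → ℤ, (∀ i, 0 ≤ w i ∧ w i ≤ (n : ℤ)) →
      A.mulVec w = (n : ℤ) • b →
      ∃ ys : Fin n → Fin d → ℤ, (∀ k, ys k ∈ S) ∧ w = ∑ k, ys k) :
    {x : Fin d → Fin n → ℤ | (∀ i j, x i j = 0 ∨ x i j = 1) ∧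
        ∃ y : Fin d → Fin n → ℤ, (∀ j, (fun i => y i j) ∈ S) ∧ EqvZ x y} =
      {x : Fin d → Fin n → ℤ | (∀ i j, x i j = 0 ∨ x i j = 1) ∧
        A.mulVec (fun i => ∑ j, x i j) = (n : ℤ) • b} := by
  subst hSdef
  ext x
  simp only [Set.mem_setOf_eq]
  constructor
  · rintro ⟨h01, y, hy, hxy⟩
    refine ⟨h01, ?_⟩
    have hrow : ∀ i, ∑ j, x i j = ∑ j, y i j := by
      intro i
      obtain ⟨σ, hσ⟩ := hxy i
      calc ∑ j, x i j = ∑ j, y i (σ j) := Finset.sum_congr rfl fun j _ => hσ j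
        _ = ∑ j, y i j := Equiv.sum_comp σ (y i)
    funext k
    calc A.mulVec (fun i => ∑ j, x i j) k
        = ∑ i, A k i * ∑ j, y i j := by
          simp only [Matrix.mulVec, dotProduct]
          exact Finset.sum_congr rfl fun i _ => by rw [hrow i]
      _ = ∑ j, ∑ i, A k i * y i j := by
          simp_rw [Finset.mul_sum]; exact Finset.sum_comm
      _ = ∑ j : Fin n, b k :=
          Finset.sum_congr rfl fun j _ => congrFun ((hy j).2) k
      _ = ((n : ℤ) • b) k := by
          simp [Finset.sum_const, mul_comm]
  · rintro ⟨h01, hmul⟩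
    refine ⟨h01, ?_⟩
    have hbound : ∀ i, 0 ≤ (∑ j, x i j) ∧ (∑ j, x i j) ≤ (n : ℤ) := by
      intro i
      constructor
      · exact Finset.sum_nonneg fun j _ => by rcases h01 i j with h | h <;> simp [h]
      · calc ∑ j, x i j ≤ ∑ _j : Fin n, (1 : ℤ) :=
              Finset.sum_le_sum fun j _ => by rcases h01 i j with h | h <;> simp [h]
          _ = (n : ℤ) := by simp
    obtain ⟨ys, hys, hsum⟩ := hBT (fun i => ∑ j, x i j) hbound hmul
    refine ⟨fun i j => ys j i, fun j => hys j, ?_⟩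
    intro i
    exact perm_of_sum_eq (x i) (fun j => ys j i) (h01 i) (fun j => (hys j).1 i)
      (by simpa [Finset.sum_apply] using congrFun hsum i)
end

section
/- Let S ⊆ {0,1}^d be downward closed and contain 0 (an independence system), and suppose for x, y ∈ S with |x| > |y| there exists i with x_i = 1, y_i = 0, and y + e_i ∈ S (so S is a matroid). Then for any two matrices x, y ∈ ↑_n S with |x| > |y| (total number of ones), there exists a position (i,j) with x_{i,j} = 1, y_{i,j'} = 0 for all j', and y + e_{(i,j)} ∈ ↑_n S for some column index j; in particular ↑_n S satisfies the matroid exchange axiom. -/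
/-- The exchange axiom for the `n`-lift of a matroid: if `x, y ∈ ↑ₙ S` with `|x| > |y|`,
then there are `i, j` with `x_{i,j} = 1`, row `i` of `y` all zero, and adding a one to
`y` at `(i,j)` keeps it in `↑ₙ S`. -/
theorem stmt16 (d n : ℕ) (S : Set (Fin d → ℕ)) (hM : IsMatroid S)
    (x y : Fin d × Fin n → ℕ) (hx : x ∈ Lift d n S) (hy : y ∈ Lift d n S)
    (hxy : (∑ p, y p) < ∑ p, x p) :
    ∃ (i : Fin d) (j : Fin n), x (i, j) = 1 ∧ (∀ j', y (i, j') = 0) ∧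
      Function.update y (i, j) 1 ∈ Lift d n S := by
  obtain ⟨hub, -, -, hexch⟩ := hM
  have hxy' : (∑ i, ∑ j, y (i, j)) < ∑ i, ∑ j, x (i, j) := by
    simpa [Fintype.sum_prod_type] using hxy
  obtain ⟨i, hxi, hyi, hupd⟩ := hexch _ hx _ hy hxy'
  have hrow0 : ∀ j', y (i, j') = 0 := by
    intro j'
    have := Finset.sum_eq_zero_iff.mp hyi
    exact this j' (Finset.mem_univ _)
  have hpos : ∃ j, x (i, j) ≠ 0 := by
    by_contra h
    push_neg at h
    rw [Finset.sum_eq_zero (fun j _ => h j)] at hxi; exact one_ne_zero hxi.symm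
  obtain ⟨j, hj⟩ := hpos
  have hxij : x (i, j) = 1 := by
    have hle : x (i, j) ≤ ∑ j', x (i, j') :=
      Finset.single_le_sum (f := fun j' => x (i, j')) (fun _ _ => Nat.zero_le _) (Finset.mem_univ j)
    omega
  refine ⟨i, j, hxij, hrow0, ?_⟩
  have key : (fun i' => ∑ j', Function.update y (i, j) 1 (i', j')) =
      Function.update (fun i' => ∑ j', y (i', j')) i 1 := by
    funext i'
    by_cases h : i' = i
    · subst h
      rw [Function.update_self]
      rw [Finset.sum_eq_single j]
      · simp [Function.update_self]
      · intro j' _ hj'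
        rw [Function.update_of_ne (by simp [hj'])]
        exact hrow0 j'
      · simp
    · rw [Function.update_of_ne h]
      apply Finset.sum_congr rfl
      intro j' _
      rw [Function.update_of_ne (by simp [h])]
  show (fun i' => ∑ j', Function.update y (i, j) 1 (i', j')) ∈ S
  rw [key]
  exact hupd
end
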